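/- arXiv:1603.08332 — 2 statements merged into one kernel-verified Lean document; each statement's English description precedes it below -/
import Mathlib

section
/- The linear map Z : h^0 → ℝ sending the word z_{k_1} z_{k_2} ⋯ z_{k_n} (with k_1 ≥ 2) to ζ(k_1,…,k_n) and 1 to 1 is an algebra homomorphism from (h^0, *) to ℝ: Z(w_1 * w_2) = Z(w_1) Z(w_2) for all w_1, w_2 ∈ h^0. -/
open MonoidAlgebra Finset

abbrev H : Type := MonoidAlgebra ℚ (FreeMonoid ℕ+)

noncomputable def word (w : List ℕ+) : H := MonoidAlgebra.single (FreeMonoid.ofList w) 1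

noncomputable def z (k : ℕ+) : H := word [k]

noncomputable def st : List ℕ+ → List ℕ+ → H
  | [], w => word w
  | k :: w1, [] => word (k :: w1)
  | k :: w1, l :: w2 =>
      z k * st w1 (l :: w2) + z l * st (k :: w1) w2 + z (k + l) * st w1 w2
termination_by a b => a.length + b.length
decreasing_by all_goals (simp; try omega)

noncomputable def stuffle (x y : H) : H :=
  Finsupp.sum x.coeff fun w1 c1 =>
    Finsupp.sum y.coeff fun w2 c2 =>
      (c1 * c2) • st (FreeMonoid.toList w1) (FreeMonoid.toList w2)

/-- The multiple zeta value ζ(k₁,…,kₙ) = ∑_{m₁ > m₂ > ⋯ > mₙ > 0} ∏ᵢ mᵢ^{-kᵢ}. -/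
noncomputable def mzv (ks : List ℕ) : ℝ :=
  ∑' m : {f : Fin ks.length → ℕ // (∀ i j : Fin ks.length, i < j → f j < f i) ∧ ∀ i, 0 < f i},
    ∏ i : Fin ks.length, (1 : ℝ) / (m.1 i : ℝ) ^ ks.get i

/-- The linear evaluation map `Z` sending a word `z_{k₁} ⋯ z_{kₙ}` to `ζ(k₁,…,kₙ)`. -/
noncomputable def Zmap (x : H) : ℝ :=
  Finsupp.sum x.coeff fun w c => (c : ℝ) * mzv ((FreeMonoid.toList w).map fun k => (k : ℕ))

/-- Membership in the subalgebra `h⁰`: every word in the support is empty or starts with a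
letter `z_k` with `k ≥ 2`. -/
def memH0 (x : H) : Prop :=
  ∀ w ∈ x.coeff.support, ∀ (k : ℕ+) (t : List ℕ+), FreeMonoid.toList w = k :: t → 2 ≤ (k : ℕ)


open Finset

def dcond {n : ℕ} (f : Fin n → ℕ) : Prop :=
  (∀ i j : Fin n, i < j → f j < f i) ∧ ∀ i, 0 < f i

noncomputable def Fp {n : ℕ} (κ : Fin n → ℕ) (f : Fin n → ℕ) : ℝ :=
  ∏ i : Fin n, (1 : ℝ) / (f i : ℝ) ^ κ i

def Bt (M n : ℕ) : Type :=
  {f : Fin n → ℕ // dcond f ∧ ∀ i, f i < M}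

noncomputable instance (M n : ℕ) : Fintype (Bt M n) :=
  Fintype.ofInjective (fun f : Bt M n => (fun i => (⟨f.1 i, f.2.2 i⟩ : Fin M)))
    (by
      intro f g h
      apply Subtype.ext; funext i
      have := congrFun h i
      simpa [Fin.mk.injEq] using this)

noncomputable def S' (M n : ℕ) (κ : Fin n → ℕ) : ℝ := ∑ f : Bt M n, Fp κ f.1

def btEquiv (M n : ℕ) :
    Bt M (n + 1) ≃ Σ m : {m : ℕ // m ∈ Finset.Ico 1 M}, Bt m.1 n where
  toFun f :=
    ⟨⟨f.1 0, by
        simp only [Finset.mem_Ico]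
        exact ⟨f.2.1.2 0, f.2.2 0⟩⟩,
     ⟨Fin.tail f.1, ⟨⟨fun i j hij => f.2.1.1 i.succ j.succ (by simpa using hij),
        fun i => f.2.1.2 i.succ⟩,
        fun i => f.2.1.1 0 i.succ (Fin.succ_pos i)⟩⟩⟩
  invFun p :=
    ⟨Fin.cons p.1.1 p.2.1, by
      obtain ⟨⟨m, hm⟩, ⟨g, ⟨hdec, hpos⟩, hbd⟩⟩ := p
      simp only [Finset.mem_Ico] at hm
      refine ⟨⟨?_, ?_⟩, ?_⟩
      · intro i j hij
        induction i using Fin.cases with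
        | zero =>
          induction j using Fin.cases with
          | zero => exact absurd hij (lt_irrefl _)
          | succ j' => simpa using hbd j'
        | succ i' =>
          induction j using Fin.cases with
          | zero => exact absurd hij (by simp [Fin.lt_def])
          | succ j' =>
            rw [Fin.cons_succ, Fin.cons_succ]
            exact hdec i' j' (by simpa [Fin.succ_lt_succ_iff] using hij)
      · intro i
        induction i using Fin.cases with
        | zero => simpa using (show 0 < m by omega)
        | succ i' => simpa using hpos i'
      · intro i
        induction i using Fin.cases with
        | zero => simpa using hm.2
        | succ i' => simpa using lt_trans (hbd i') hm.2⟩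
  left_inv f := Subtype.ext (Fin.cons_self_tail f.1)
  right_inv p := rfl

theorem Fp_cons {n : ℕ} (κ : Fin (n + 1) → ℕ) (m : ℕ) (g : Fin n → ℕ) :
    Fp κ (Fin.cons m g) = (1 / (m : ℝ) ^ κ 0) * Fp (Fin.tail κ) g := by
  unfold Fp
  rw [Fin.prod_univ_succ]
  simp [Fin.cons_zero, Fin.tail]

theorem S'_rec (M n : ℕ) (κ : Fin (n + 1) → ℕ) :
    S' M (n + 1) κ = ∑ m ∈ Finset.Ico 1 M, (1 / (m : ℝ) ^ κ 0) * S' m n (Fin.tail κ) := by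
  unfold S'
  rw [← Equiv.sum_comp (btEquiv M n).symm (fun f => Fp κ f.1)]
  have h1 : ∀ p : Σ m : {m : ℕ // m ∈ Finset.Ico 1 M}, Bt m.1 n,
      Fp κ ((btEquiv M n).symm p).1 = (1 / (p.1.1 : ℝ) ^ κ 0) * Fp (Fin.tail κ) p.2.1 := by
    rintro ⟨⟨m, hm⟩, ⟨g, hg⟩⟩
    exact Fp_cons κ m g
  rw [Finset.sum_congr rfl (fun p _ => h1 p)]
  rw [← Finset.univ_sigma_univ, Finset.sum_sigma]
  rw [← Finset.sum_coe_sort (Finset.Ico 1 M) (fun m => (1 / (m : ℝ) ^ κ 0) * ∑ f : Bt m n, Fp (Fin.tail κ) f.1)]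
  exact Finset.sum_congr rfl (fun m _ => by rw [Finset.mul_sum])


instance (M : ℕ) : Unique (Bt M 0) :=
  ⟨⟨⟨fun i => i.elim0, ⟨⟨fun i => i.elim0, fun i => i.elim0⟩, fun i => i.elim0⟩⟩⟩,
   fun f => Subtype.ext (funext fun i => i.elim0)⟩

theorem S'_nil (M : ℕ) (κ : Fin 0 → ℕ) : S' M 0 κ = 1 := by
  unfold S'
  rw [Fintype.sum_unique]
  unfold Fp
  simp

theorem Fp_nonneg {n : ℕ} (κ f : Fin n → ℕ) : 0 ≤ Fp κ f := by
  unfold Fp; positivity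

theorem S'_nonneg (M n : ℕ) (κ : Fin n → ℕ) : 0 ≤ S' M n κ :=
  Finset.sum_nonneg fun f _ => Fp_nonneg κ f.1
section Part2
open Filter

theorem sqrt_sum_le (N : ℕ) :
    ∑ m ∈ Finset.Icc 1 N, (1 : ℝ) / Real.sqrt m ≤ 2 * Real.sqrt N := by
  induction N with
  | zero => simp
  | succ N IH =>
    rw [Finset.sum_Icc_succ_top (by omega : 1 ≤ N + 1)]
    have ha : (0:ℝ) < Real.sqrt (N+1) := Real.sqrt_pos.mpr (by positivity)
    have hb : (0:ℝ) ≤ Real.sqrt N := Real.sqrt_nonneg N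
    have haa : Real.sqrt (N+1) * Real.sqrt (N+1) = (N+1:ℝ) := Real.mul_self_sqrt (by positivity)
    have hbb : Real.sqrt N * Real.sqrt N = (N:ℝ) := Real.mul_self_sqrt (by positivity)
    have key : 1 / Real.sqrt (N+1) ≤ 2 * Real.sqrt (N+1) - 2 * Real.sqrt N := by
      rw [div_le_iff₀ ha]
      nlinarith [sq_nonneg (Real.sqrt (N+1) - Real.sqrt N)]
    push_cast
    linarith [IH, key]

theorem sqrt_sum_Ico_le (M : ℕ) :
    ∑ m ∈ Finset.Ico 1 M, (1 : ℝ) / Real.sqrt m ≤ 2 * Real.sqrt M := by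
  refine le_trans (Finset.sum_le_sum_of_subset_of_nonneg ?_ ?_) (sqrt_sum_le M)
  · intro x hx; simp only [Finset.mem_Ico] at hx; simp only [Finset.mem_Icc]; omega
  · intro i _ _; positivity

theorem S'_le_sqrt : ∀ (n : ℕ) (κ : Fin n → ℕ), (∀ i, 1 ≤ κ i) →
    ∀ M : ℕ, 1 ≤ M → S' M n κ ≤ 2 ^ n * Real.sqrt M := by
  intro n
  induction n with
  | zero =>
    intro κ _ M hM
    rw [S'_nil]
    have : (1:ℝ) ≤ Real.sqrt M := Real.one_le_sqrt.mpr (by exact_mod_cast hM)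
    simpa using this
  | succ n IH =>
    intro κ hκ M hM
    rw [S'_rec]
    have hterm : ∀ m ∈ Finset.Ico 1 M,
        (1 / (m : ℝ) ^ κ 0) * S' m n (Fin.tail κ) ≤ 2 ^ n * (1 / Real.sqrt m) := by
      intro m hm
      simp only [Finset.mem_Ico] at hm
      have hm1 : (1:ℝ) ≤ (m:ℝ) := by exact_mod_cast hm.1
      have hmpos : (0:ℝ) < m := by linarith
      have h1 : (1 / (m : ℝ) ^ κ 0) ≤ 1 / m := by
        apply one_div_le_one_div_of_le hmpos
        calc (m:ℝ) = (m:ℝ) ^ 1 := (pow_one _).symm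
        _ ≤ (m:ℝ) ^ κ 0 := pow_le_pow_right₀ hm1 (hκ 0)
      have h2 : S' m n (Fin.tail κ) ≤ 2 ^ n * Real.sqrt m :=
        IH (Fin.tail κ) (fun i => hκ i.succ) m hm.1
      have h3 : (1 / (m : ℝ) ^ κ 0) * S' m n (Fin.tail κ) ≤ (1 / m) * (2 ^ n * Real.sqrt m) := by
        apply mul_le_mul h1 h2 (S'_nonneg _ _ _)
        positivity
      refine h3.trans (le_of_eq ?_)
      have hs : Real.sqrt m * Real.sqrt m = (m:ℝ) := Real.mul_self_sqrt (le_of_lt hmpos)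
      have hsp : (0:ℝ) < Real.sqrt m := Real.sqrt_pos.mpr hmpos
      field_simp
      linear_combination hs
    calc ∑ m ∈ Finset.Ico 1 M, (1 / (m : ℝ) ^ κ 0) * S' m n (Fin.tail κ)
        ≤ ∑ m ∈ Finset.Ico 1 M, 2 ^ n * (1 / Real.sqrt m) := Finset.sum_le_sum hterm
      _ = 2 ^ n * ∑ m ∈ Finset.Ico 1 M, (1 / Real.sqrt m) := by rw [Finset.mul_sum]
      _ ≤ 2 ^ n * (2 * Real.sqrt M) := by
          have := sqrt_sum_Ico_le M
          have h2n : (0:ℝ) ≤ 2 ^ n := by positivity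
          nlinarith
      _ = 2 ^ (n+1) * Real.sqrt M := by ring

noncomputable def Ksum : ℝ := ∑' m : ℕ, (1 : ℝ) / ((m : ℝ) * Real.sqrt m)

theorem summable_Ksum : Summable (fun m : ℕ => (1 : ℝ) / ((m : ℝ) * Real.sqrt m)) := by
  have h : (fun m : ℕ => (1 : ℝ) / ((m : ℝ) * Real.sqrt m))
      = fun m : ℕ => ((m : ℝ) ^ ((3:ℝ)/2))⁻¹ := by
    funext m
    rcases Nat.eq_zero_or_pos m with h0 | h1
    · subst h0; simp
    · have hm : (0:ℝ) < m := by exact_mod_cast h1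
      rw [one_div, Real.rpow_def_of_pos hm]
      congr 1
      rw [show (3:ℝ)/2 = 1 + 1/2 by norm_num, ← Real.rpow_def_of_pos hm,
        Real.rpow_add hm, Real.rpow_one, ← Real.sqrt_eq_rpow]
  rw [h]
  exact Real.summable_nat_rpow_inv.mpr (by norm_num)

theorem Ksum_nonneg : 0 ≤ Ksum :=
  tsum_nonneg fun m => by positivity

theorem S'_bdd (n : ℕ) (κ : Fin n → ℕ) (hκ1 : ∀ i, 1 ≤ κ i)
    (hκ0 : ∀ i : Fin n, (i : ℕ) = 0 → 2 ≤ κ i) (M : ℕ) :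
    S' M n κ ≤ 2 ^ n * Ksum + 1 := by
  cases n with
  | zero =>
    rw [S'_nil]
    nlinarith [Ksum_nonneg]
  | succ n =>
    rw [S'_rec]
    have hterm : ∀ m ∈ Finset.Ico 1 M,
        (1 / (m : ℝ) ^ κ 0) * S' m n (Fin.tail κ) ≤ 2 ^ n * ((1:ℝ) / ((m:ℝ) * Real.sqrt m)) := by
      intro m hm
      simp only [Finset.mem_Ico] at hm
      have hm1 : (1:ℝ) ≤ (m:ℝ) := by exact_mod_cast hm.1
      have hmpos : (0:ℝ) < m := by linarith
      have h1 : (1 / (m : ℝ) ^ κ 0) ≤ 1 / (m:ℝ)^2 := by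
        apply one_div_le_one_div_of_le (by positivity)
        exact pow_le_pow_right₀ hm1 (hκ0 0 rfl)
      have h2 : S' m n (Fin.tail κ) ≤ 2 ^ n * Real.sqrt m :=
        S'_le_sqrt n (Fin.tail κ) (fun i => hκ1 i.succ) m hm.1
      have h3 : (1 / (m : ℝ) ^ κ 0) * S' m n (Fin.tail κ)
          ≤ (1 / (m:ℝ)^2) * (2 ^ n * Real.sqrt m) := by
        apply mul_le_mul h1 h2 (S'_nonneg _ _ _)
        positivity
      refine h3.trans (le_of_eq ?_)
      have hs : Real.sqrt m * Real.sqrt m = (m:ℝ) := Real.mul_self_sqrt (le_of_lt hmpos)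
      have hsp : (0:ℝ) < Real.sqrt m := Real.sqrt_pos.mpr hmpos
      field_simp
      linear_combination hs
    calc ∑ m ∈ Finset.Ico 1 M, (1 / (m : ℝ) ^ κ 0) * S' m n (Fin.tail κ)
        ≤ ∑ m ∈ Finset.Ico 1 M, 2 ^ n * ((1:ℝ) / ((m:ℝ) * Real.sqrt m)) :=
          Finset.sum_le_sum hterm
      _ = 2 ^ n * ∑ m ∈ Finset.Ico 1 M, ((1:ℝ) / ((m:ℝ) * Real.sqrt m)) := by
          rw [Finset.mul_sum]
      _ ≤ 2 ^ n * Ksum := by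
          have hle : ∑ m ∈ Finset.Ico 1 M, ((1:ℝ) / ((m:ℝ) * Real.sqrt m)) ≤ Ksum :=
            summable_Ksum.sum_le_tsum _ (fun m _ => by positivity)
          have h2n : (0:ℝ) ≤ 2 ^ n := by positivity
          nlinarith
      _ ≤ 2 ^ (n+1) * Ksum + 1 := by
          rw [pow_succ]
          nlinarith [Ksum_nonneg, pow_nonneg (by norm_num : (0:ℝ) ≤ 2) n]

def Ct (n : ℕ) : Type := {f : Fin n → ℕ // dcond f}

def btIncl (M n : ℕ) : Bt M n → Ct n := fun f => ⟨f.1, f.2.1⟩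

theorem btIncl_inj (M n : ℕ) : Function.Injective (btIncl M n) := by
  intro f g h
  have := congrArg (fun x : Ct n => x.1) h
  exact Subtype.ext this

noncomputable def sM (M n : ℕ) : Finset (Ct n) :=
  Finset.univ.map ⟨btIncl M n, btIncl_inj M n⟩

theorem sum_sM (M n : ℕ) (κ : Fin n → ℕ) :
    ∑ f ∈ sM M n, Fp κ f.1 = S' M n κ := by
  unfold sM S'
  rw [Finset.sum_map]
  rfl

theorem sM_mono (n : ℕ) : Monotone (fun M => sM M n) := by
  intro M M' hMM x hx
  simp only [sM, Finset.mem_map, Function.Embedding.coeFn_mk] at hx ⊢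
  obtain ⟨f, _, rfl⟩ := hx
  exact ⟨⟨f.1, f.2.1, fun i => lt_of_lt_of_le (f.2.2 i) hMM⟩, Finset.mem_univ _, rfl⟩

theorem sM_exhaust (n : ℕ) (x : Ct n) : ∃ M, x ∈ sM M n := by
  refine ⟨(Finset.univ.sup x.1) + 1, ?_⟩
  simp only [sM, Finset.mem_map, Function.Embedding.coeFn_mk]
  exact ⟨⟨x.1, x.2, fun i => Nat.lt_succ_of_le (Finset.le_sup (Finset.mem_univ i))⟩,
    Finset.mem_univ _, rfl⟩

theorem summable_Fp (n : ℕ) (κ : Fin n → ℕ) (hκ1 : ∀ i, 1 ≤ κ i)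
    (hκ0 : ∀ i : Fin n, (i : ℕ) = 0 → 2 ≤ κ i) :
    Summable (fun f : Ct n => Fp κ f.1) := by
  refine summable_of_sum_le (c := 2 ^ n * Ksum + 1) (fun f => Fp_nonneg κ f.1) (fun u => ?_)
  obtain ⟨M, hM⟩ : ∃ M, u ⊆ sM M n := by
    refine ⟨(u.sup fun x => Finset.univ.sup x.1) + 1, ?_⟩
    intro x hx
    simp only [sM, Finset.mem_map, Function.Embedding.coeFn_mk]
    refine ⟨⟨x.1, x.2, fun i => ?_⟩, Finset.mem_univ _, rfl⟩
    exact Nat.lt_succ_of_le (le_trans (Finset.le_sup (Finset.mem_univ i))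
      (Finset.le_sup (f := fun x : Ct n => Finset.univ.sup x.1) hx))
  calc ∑ f ∈ u, Fp κ f.1 ≤ ∑ f ∈ sM M n, Fp κ f.1 :=
        Finset.sum_le_sum_of_subset_of_nonneg hM (fun f _ _ => Fp_nonneg κ f.1)
    _ = S' M n κ := sum_sM M n κ
    _ ≤ 2 ^ n * Ksum + 1 := S'_bdd n κ hκ1 hκ0 M

theorem tendsto_S' (n : ℕ) (κ : Fin n → ℕ) (hκ1 : ∀ i, 1 ≤ κ i)
    (hκ0 : ∀ i : Fin n, (i : ℕ) = 0 → 2 ≤ κ i) :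
    Tendsto (fun M => S' M n κ) atTop (nhds (∑' f : Ct n, Fp κ f.1)) := by
  have hs := (summable_Fp n κ hκ1 hκ0).hasSum
  have hmono : Tendsto (fun M => sM M n) atTop atTop :=
    Filter.tendsto_atTop_finset_of_monotone (sM_mono n) (sM_exhaust n)
  have := hs.comp hmono
  simpa only [Function.comp_def, sum_sM] using this

end Part2
def κof (ks : List ℕ) : Fin ks.length → ℕ := fun i => ks.get i

theorem mzv_eq (ks : List ℕ) : mzv ks = ∑' f : Ct ks.length, Fp (κof ks) f.1 := rfl

noncomputable def Sl (M : ℕ) (ks : List ℕ) : ℝ := S' M ks.length (κof ks)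

theorem Sl_nil (M : ℕ) : Sl M [] = 1 := S'_nil M _

theorem Sl_cons (M k : ℕ) (ks : List ℕ) :
    Sl M (k :: ks) = ∑ m ∈ Finset.Ico 1 M, (1 / (m : ℝ) ^ k) * Sl m ks := by
  show S' M (ks.length + 1) (κof (k :: ks)) = _
  rw [S'_rec]
  rfl

example (k : ℕ+) (w : FreeMonoid ℕ+) :
    FreeMonoid.toList (FreeMonoid.of k * w) = k :: FreeMonoid.toList w := by
  simp

example (w1 w2 : List ℕ+) : st [] w2 = word w2 := by rw [st]
example (k : ℕ+) (w1 : List ℕ+) : st (k :: w1) [] = word (k :: w1) := by rw [st]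
example (k l : ℕ+) (w1 w2 : List ℕ+) : st (k :: w1) (l :: w2) =
    z k * st w1 (l :: w2) + z l * st (k :: w1) w2 + z (k + l) * st w1 w2 := by rw [st]
def adm (l : List ℕ+) : Prop := ∀ (k : ℕ+) (t : List ℕ+), l = k :: t → 2 ≤ (k : ℕ)

def ksOf (l : List ℕ+) : List ℕ := l.map fun k => (k : ℕ)

theorem ksOf_nil : ksOf [] = [] := rfl

theorem ksOf_cons (k : ℕ+) (t : List ℕ+) : ksOf (k :: t) = (k : ℕ) :: ksOf t := rfl

theorem ksOf_eq : ∀ l : List ℕ+, ksOf l = List.map (fun k : ℕ+ => (k : ℕ)) l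
  | [] => rfl
  | k :: t => by rw [ksOf_cons, ksOf_eq t]; rfl

theorem ksOf_mem (l : List ℕ+) (x : ℕ) (hx : x ∈ ksOf l) : 1 ≤ x := by
  rw [ksOf_eq] at hx
  obtain ⟨k, _, rfl⟩ := List.mem_map.mp hx
  exact k.one_le

open Filter in
theorem tendsto_Sl (w : List ℕ+) (h : adm w) :
    Tendsto (fun M => Sl M (ksOf w)) atTop (nhds (mzv (ksOf w))) := by
  rw [mzv_eq]
  apply tendsto_S'
  · intro i
    exact ksOf_mem w _ (List.get_mem (ksOf w) i)
  · intro i hi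
    match w, i with
    | k :: t, i =>
      have h2 : 2 ≤ (k : ℕ) := h k t rfl
      show 2 ≤ (ksOf (k :: t)).get i
      have hi' : i = ⟨0, by rw [← hi]; exact i.2⟩ := Fin.ext hi
      rw [hi']
      exact h2

noncomputable def SMap (M : ℕ) (x : H) : ℝ :=
  Finsupp.sum x.coeff fun w c => (c : ℝ) * Sl M (ksOf (FreeMonoid.toList w))

theorem SMap_add (M : ℕ) (x y : H) : SMap M (x + y) = SMap M x + SMap M y := by
  unfold SMap; rw [MonoidAlgebra.coeff_add]; exact Finsupp.sum_add_index' (by simp) (by intro w c1 c2; push_cast; ring)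

theorem SMap_word (M : ℕ) (w : List ℕ+) : SMap M (word w) = Sl M (ksOf w) := by
  unfold SMap word
  rw [MonoidAlgebra.coeff_single]
  rw [Finsupp.sum_single_index (by simp)]
  simp

theorem zmul (k : ℕ+) (v : H) :
    (z k * v).coeff = Finsupp.mapDomain (fun w => FreeMonoid.of k * w) v.coeff := by
  classical
  induction v using MonoidAlgebra.induction_linear with
  | zero => simp
  | add f g hf hg => rw [mul_add, MonoidAlgebra.coeff_add, hf, hg, MonoidAlgebra.coeff_add, Finsupp.mapDomain_add]
  | single a b =>
    show (MonoidAlgebra.single (FreeMonoid.ofList [k]) 1 * MonoidAlgebra.single a b).coeff = _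
    rw [MonoidAlgebra.single_mul_single, MonoidAlgebra.coeff_single, MonoidAlgebra.coeff_single,
      Finsupp.mapDomain_single]
    norm_num

theorem SMap_zmul (M : ℕ) (k : ℕ+) (v : H) :
    SMap M (z k * v) = ∑ m ∈ Finset.Ico 1 M, (1 / (m : ℝ) ^ (k : ℕ)) * SMap m v := by
  unfold SMap
  rw [zmul]
  rw [Finsupp.sum_mapDomain_index (by simp) (by intro w c1 c2; push_cast; ring)]
  have hres : ∀ (w : FreeMonoid ℕ+) (c : ℚ),
      (c : ℝ) * Sl M (ksOf (FreeMonoid.toList (FreeMonoid.of k * w)))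
      = ∑ m ∈ Finset.Ico 1 M, (1 / (m : ℝ) ^ (k : ℕ)) * ((c:ℝ) * Sl m (ksOf (FreeMonoid.toList w))) := by
    intro w c
    have h1 : FreeMonoid.toList (FreeMonoid.of k * w) = k :: FreeMonoid.toList w := by simp
    rw [h1]
    show (c : ℝ) * Sl M ((k : ℕ) :: ksOf (FreeMonoid.toList w)) = _
    rw [Sl_cons, Finset.mul_sum]
    exact Finset.sum_congr rfl fun m _ => by ring
  rw [Finsupp.sum]
  rw [Finset.sum_congr rfl (fun w _ => hres w (v.coeff w))]
  rw [Finset.sum_comm]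
  refine Finset.sum_congr rfl fun m _ => ?_
  rw [Finsupp.sum, Finset.mul_sum]
theorem split_sum (f g : ℕ → ℝ) (M : ℕ) :
    (∑ m ∈ Finset.Ico 1 M, f m) * (∑ n ∈ Finset.Ico 1 M, g n)
    = (∑ m ∈ Finset.Ico 1 M, f m * ∑ n ∈ Finset.Ico 1 m, g n)
    + (∑ n ∈ Finset.Ico 1 M, g n * ∑ m ∈ Finset.Ico 1 n, f m)
    + ∑ m ∈ Finset.Ico 1 M, f m * g m := by
  induction M with
  | zero => simp
  | succ M IH =>
    rcases Nat.eq_zero_or_pos M with rfl | hM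
    · simp
    rw [Finset.sum_Ico_succ_top hM f, Finset.sum_Ico_succ_top hM g,
        Finset.sum_Ico_succ_top hM (fun m => f m * ∑ n ∈ Finset.Ico 1 m, g n),
        Finset.sum_Ico_succ_top hM (fun n => g n * ∑ m ∈ Finset.Ico 1 n, f m),
        Finset.sum_Ico_succ_top hM (fun m => f m * g m)]
    linear_combination IH

theorem adm_cons {k : ℕ+} {l : List ℕ+} (hk : 2 ≤ (k : ℕ)) : adm (k :: l) := by
  intro k' t' h
  rw [List.cons.injEq] at h
  rw [← h.1]
  exact hk

theorem adm_nil : adm [] := fun k t h => by simp at h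

noncomputable instance : DecidableEq (FreeMonoid ℕ+) := Classical.decEq _

theorem support_zmul (k : ℕ+) (v : H) :
    (z k * v).coeff.support ⊆ v.coeff.support.image (fun w => FreeMonoid.of k * w) := by
  classical
  rw [zmul]
  exact Finsupp.mapDomain_support

theorem st_adm (w1 w2 : List ℕ+) (h1 : adm w1) (h2 : adm w2) :
    ∀ w ∈ (st w1 w2).coeff.support, adm (FreeMonoid.toList w) := by
  classical
  match w1, w2 with
  | [], w2 =>
    intro w hw
    rw [st] at hw
    have := Finsupp.support_single_subset hw
    rw [Finset.mem_singleton] at this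
    rw [this, FreeMonoid.toList_ofList]
    exact h2
  | k :: t1, [] =>
    intro w hw
    rw [st] at hw
    have := Finsupp.support_single_subset hw
    rw [Finset.mem_singleton] at this
    rw [this, FreeMonoid.toList_ofList]
    exact h1
  | k :: t1, l :: t2 =>
    intro w hw
    rw [st] at hw
    simp only [MonoidAlgebra.coeff_add] at hw
    have hk : 2 ≤ (k : ℕ) := h1 k t1 rfl
    have hl : 2 ≤ (l : ℕ) := h2 l t2 rfl
    have hsub := Finsupp.support_add hw
    rw [Finset.mem_union] at hsub
    rcases hsub with hsub | hc
    · have hsub2 := Finsupp.support_add hsub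
      rw [Finset.mem_union] at hsub2
      rcases hsub2 with ha | hb
      · obtain ⟨w', _, rfl⟩ := Finset.mem_image.mp (support_zmul k _ ha)
        rw [show FreeMonoid.toList (FreeMonoid.of k * w') = k :: FreeMonoid.toList w' by simp]
        exact adm_cons hk
      · obtain ⟨w', _, rfl⟩ := Finset.mem_image.mp (support_zmul l _ hb)
        rw [show FreeMonoid.toList (FreeMonoid.of l * w') = l :: FreeMonoid.toList w' by simp]
        exact adm_cons hl
    · obtain ⟨w', _, rfl⟩ := Finset.mem_image.mp (support_zmul (k + l) _ hc)
      rw [show FreeMonoid.toList (FreeMonoid.of (k+l) * w') = (k+l) :: FreeMonoid.toList w' by simp]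
      apply adm_cons
      push_cast
      omega

theorem SMap_st : ∀ (N : ℕ) (w1 w2 : List ℕ+), w1.length + w2.length ≤ N → ∀ M,
    SMap M (st w1 w2) = Sl M (ksOf w1) * Sl M (ksOf w2) := by
  intro N
  induction N with
  | zero =>
    intro w1 w2 hlen M
    obtain ⟨rfl, rfl⟩ : w1 = [] ∧ w2 = [] := by
      constructor <;> (apply List.eq_nil_of_length_eq_zero; omega)
    rw [st, SMap_word, ksOf_nil, Sl_nil]
    ring
  | succ N IH =>
    intro w1 w2 hlen M
    match w1, w2 with
    | [], w2 =>
      rw [st, SMap_word, ksOf_nil, Sl_nil]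
      ring
    | k :: t1, [] =>
      rw [st, SMap_word, ksOf_nil, Sl_nil]
      ring
    | k :: t1, l :: t2 =>
      rw [st, SMap_add, SMap_add, SMap_zmul, SMap_zmul, SMap_zmul]
      have hL1 : (t1.length + (l :: t2).length) ≤ N := by simp at hlen ⊢; omega
      have hL2 : ((k :: t1).length + t2.length) ≤ N := by simp at hlen ⊢; omega
      have hL3 : (t1.length + t2.length) ≤ N := by simp at hlen ⊢; omega
      have E1 : ∑ m ∈ Finset.Ico 1 M, (1/(m:ℝ)^(k:ℕ)) * SMap m (st t1 (l :: t2))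
          = ∑ m ∈ Finset.Ico 1 M,
            ((1/(m:ℝ)^(k:ℕ)) * Sl m (ksOf t1)) * ∑ n ∈ Finset.Ico 1 m, ((1/(n:ℝ)^(l:ℕ)) * Sl n (ksOf t2)) :=
        Finset.sum_congr rfl fun m _ => by
          rw [IH t1 (l :: t2) hL1 m, ksOf_cons, Sl_cons]; ring
      have E2 : ∑ m ∈ Finset.Ico 1 M, (1/(m:ℝ)^(l:ℕ)) * SMap m (st (k :: t1) t2)
          = ∑ n ∈ Finset.Ico 1 M,
            ((1/(n:ℝ)^(l:ℕ)) * Sl n (ksOf t2)) * ∑ m ∈ Finset.Ico 1 n, ((1/(m:ℝ)^(k:ℕ)) * Sl m (ksOf t1)) :=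
        Finset.sum_congr rfl fun m _ => by
          rw [IH (k :: t1) t2 hL2 m, ksOf_cons, Sl_cons]; ring
      have E3 : ∑ m ∈ Finset.Ico 1 M, (1/(m:ℝ)^((k+l : ℕ+):ℕ)) * SMap m (st t1 t2)
          = ∑ m ∈ Finset.Ico 1 M,
            ((1/(m:ℝ)^(k:ℕ)) * Sl m (ksOf t1)) * ((1/(m:ℝ)^(l:ℕ)) * Sl m (ksOf t2)) :=
        Finset.sum_congr rfl fun m _ => by
          rw [IH t1 t2 hL3 m, show ((k + l : ℕ+) : ℕ) = (k : ℕ) + (l : ℕ) by push_cast; ring,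
            pow_add]
          ring
      rw [E1, E2, E3, ksOf_cons, ksOf_cons, Sl_cons M (k:ℕ) (ksOf t1), Sl_cons M (l:ℕ) (ksOf t2)]
      exact (split_sum (fun m => (1 / (m:ℝ) ^ (k:ℕ)) * Sl m (ksOf t1))
            (fun n => (1 / (n:ℝ) ^ (l:ℕ)) * Sl n (ksOf t2)) M).symm

theorem Zmap_eq (x : H) :
    Zmap x = Finsupp.sum x.coeff fun w c => (c : ℝ) * mzv (ksOf (FreeMonoid.toList w)) := rfl

theorem Zmap_add (x y : H) : Zmap (x + y) = Zmap x + Zmap y := by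
  rw [Zmap_eq, Zmap_eq, Zmap_eq, MonoidAlgebra.coeff_add]
  exact Finsupp.sum_add_index' (by simp) (by intro w c1 c2; push_cast; ring)

noncomputable def ZmapA : H →+ ℝ := AddMonoidHom.mk' Zmap Zmap_add

theorem Zmap_smul (c : ℚ) (v : H) : Zmap (c • v) = (c : ℝ) * Zmap v := by
  rw [Zmap_eq, Zmap_eq]
  rw [MonoidAlgebra.coeff_smul, Finsupp.sum_smul_index' (by simp)]
  rw [Finsupp.mul_sum]
  refine Finsupp.sum_congr fun w _ => ?_
  rw [smul_eq_mul]
  push_cast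
  ring

theorem Zmap_sum {ι : Type} (s : Finset ι) (f : ι → H) :
    Zmap (∑ i ∈ s, f i) = ∑ i ∈ s, Zmap (f i) := map_sum ZmapA f s

open Filter in
theorem tendsto_SMap (v : H) (hv : ∀ w ∈ v.coeff.support, adm (FreeMonoid.toList w)) :
    Tendsto (fun M => SMap M v) atTop (nhds (Zmap v)) := by
  have h1 : ∀ M, SMap M v
      = ∑ w ∈ v.coeff.support, (v.coeff w : ℝ) * Sl M (ksOf (FreeMonoid.toList w)) := fun M => rfl
  have h2 : Zmap v = ∑ w ∈ v.coeff.support, (v.coeff w : ℝ) * mzv (ksOf (FreeMonoid.toList w)) := rfl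
  simp only [h1, h2]
  exact tendsto_finset_sum _ fun w hw =>
    (tendsto_Sl (FreeMonoid.toList w) (hv w hw)).const_mul _

open Filter in
theorem Zmap_st (w1 w2 : List ℕ+) (h1 : adm w1) (h2 : adm w2) :
    Zmap (st w1 w2) = mzv (ksOf w1) * mzv (ksOf w2) := by
  have hA := tendsto_SMap (st w1 w2) (st_adm w1 w2 h1 h2)
  have heq : (fun M => SMap M (st w1 w2)) = fun M => Sl M (ksOf w1) * Sl M (ksOf w2) :=
    funext fun M => SMap_st (w1.length + w2.length) w1 w2 le_rfl M
  rw [heq] at hA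
  exact tendsto_nhds_unique hA ((tendsto_Sl w1 h1).mul (tendsto_Sl w2 h2))

theorem Zmap_stuffle (x y : H) (hx : memH0 x) (hy : memH0 y) :
    Zmap (stuffle x y) = Zmap x * Zmap y := by
  rw [stuffle]
  rw [Finsupp.sum]
  rw [Zmap_sum]
  have hinner : ∀ w1 ∈ x.coeff.support,
      Zmap (Finsupp.sum y.coeff fun w2 c2 => ((x.coeff w1) * c2) • st (FreeMonoid.toList w1) (FreeMonoid.toList w2))
      = ∑ w2 ∈ y.coeff.support, ((x.coeff w1 : ℝ) * (y.coeff w2 : ℝ))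
          * (mzv (ksOf (FreeMonoid.toList w1)) * mzv (ksOf (FreeMonoid.toList w2))) := by
    intro w1 hw1
    rw [Finsupp.sum, Zmap_sum]
    refine Finset.sum_congr rfl fun w2 hw2 => ?_
    rw [Zmap_smul, Zmap_st (FreeMonoid.toList w1) (FreeMonoid.toList w2)
        (hx w1 hw1) (hy w2 hw2)]
    push_cast
    ring
  rw [Finset.sum_congr rfl hinner]
  have hZx : Zmap x = ∑ w ∈ x.coeff.support, (x.coeff w : ℝ) * mzv (ksOf (FreeMonoid.toList w)) := rfl
  have hZy : Zmap y = ∑ w ∈ y.coeff.support, (y.coeff w : ℝ) * mzv (ksOf (FreeMonoid.toList w)) := rfl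
  rw [hZx, hZy, Finset.sum_mul_sum]
  exact Finset.sum_congr rfl fun w1 _ => Finset.sum_congr rfl fun w2 _ => by ring
end

section
/- The linear map Z* : h^0 → ℝ sending the word z_{k_1} z_{k_2} ⋯ z_{k_n} (with k_1 ≥ 2) to ζ*(k_1,…,k_n) and 1 to 1 satisfies Z*(w_1 ⋆̄ w_2) = Z*(w_1) Z*(w_2) for all w_1, w_2 ∈ h^0. -/
open MonoidAlgebra Finset

noncomputable def stbar : List ℕ+ → List ℕ+ → H
  | [], w => word w
  | k :: w1, [] => word (k :: w1)
  | k :: w1, l :: w2 =>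
      z k * stbar w1 (l :: w2) + z l * stbar (k :: w1) w2 - z (k + l) * stbar w1 w2
termination_by a b => a.length + b.length
decreasing_by all_goals (simp; try omega)

noncomputable def stuffleBar (x y : H) : H :=
  Finsupp.sum x.coeff fun w1 c1 =>
    Finsupp.sum y.coeff fun w2 c2 =>
      (c1 * c2) • stbar (FreeMonoid.toList w1) (FreeMonoid.toList w2)

/-- The multiple zeta-star value ζ*(k₁,…,kₙ) = ∑_{m₁ ≥ m₂ ≥ ⋯ ≥ mₙ ≥ 1} ∏ᵢ mᵢ^{-kᵢ}. -/
noncomputable def mzvStar (ks : List ℕ) : ℝ :=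
  ∑' m : {f : Fin ks.length → ℕ // (∀ i j : Fin ks.length, i < j → f j ≤ f i) ∧ ∀ i, 1 ≤ f i},
    ∏ i : Fin ks.length, (1 : ℝ) / (m.1 i : ℝ) ^ ks.get i

/-- The linear evaluation map `Z*` sending a word `z_{k₁} ⋯ z_{kₙ}` to `ζ*(k₁,…,kₙ)`. -/
noncomputable def ZstarMap (x : H) : ℝ :=
  Finsupp.sum x.coeff fun w c => (c : ℝ) * mzvStar ((FreeMonoid.toList w).map fun k => (k : ℕ))

noncomputable def Tn : List ℕ → ℕ → ℝ
  | [], _ => 1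
  | k :: t, M => ∑ m ∈ Finset.Icc 1 M, (1 / (m : ℝ) ^ k) * Tn t m

@[simp] lemma Tn_nil (M : ℕ) : Tn [] M = 1 := rfl

lemma Tn_cons (k : ℕ) (t : List ℕ) (M : ℕ) :
    Tn (k :: t) M = ∑ m ∈ Finset.Icc 1 M, (1 / (m : ℝ) ^ k) * Tn t m := rfl

lemma Tn_nonneg (ks : List ℕ) (M : ℕ) : 0 ≤ Tn ks M := by
  induction ks generalizing M with
  | nil => norm_num
  | cons k t ih =>
    rw [Tn_cons]
    exact Finset.sum_nonneg fun m _ => mul_nonneg (by positivity) (ih m)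

lemma Tn_mono (ks : List ℕ) {M M' : ℕ} (h : M ≤ M') : Tn ks M ≤ Tn ks M' := by
  cases ks with
  | nil => simp
  | cons k t =>
    rw [Tn_cons, Tn_cons]
    refine Finset.sum_le_sum_of_subset_of_nonneg (Finset.Icc_subset_Icc_right h) ?_
    exact fun m _ _ => mul_nonneg (by positivity) (Tn_nonneg t m)

noncomputable def HH (M : ℕ) : ℝ := 1 + ∑ m ∈ Finset.Icc 1 M, (m : ℝ)⁻¹

lemma one_le_HH (M : ℕ) : 1 ≤ HH M := by
  have : 0 ≤ ∑ m ∈ Finset.Icc 1 M, (m : ℝ)⁻¹ :=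
    Finset.sum_nonneg fun m _ => by positivity
  simp only [HH]; linarith

lemma Tn_le_HH_pow (ks : List ℕ) (h1 : ∀ x ∈ ks, 1 ≤ x) (M : ℕ) :
    Tn ks M ≤ HH M ^ ks.length := by
  induction ks generalizing M with
  | nil => simp
  | cons k t ih =>
    rw [Tn_cons]
    have h0 : 0 ≤ HH M ^ t.length := le_trans zero_le_one (one_le_pow₀ (one_le_HH M))
    calc ∑ m ∈ Finset.Icc 1 M, (1 / (m : ℝ) ^ k) * Tn t m
        ≤ ∑ m ∈ Finset.Icc 1 M, (m : ℝ)⁻¹ * HH M ^ t.length := by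
          refine Finset.sum_le_sum fun m hm => ?_
          have hm1 : 1 ≤ m := (Finset.mem_Icc.mp hm).1
          have hmM : m ≤ M := (Finset.mem_Icc.mp hm).2
          have hk1 : 1 ≤ k := h1 k List.mem_cons_self
          have h2 : (1 : ℝ) / (m : ℝ) ^ k ≤ (m : ℝ)⁻¹ := by
            rw [one_div]
            refine inv_anti₀ (by exact_mod_cast hm1) ?_
            calc ((m : ℝ) : ℝ) = (m : ℝ) ^ 1 := (pow_one _).symm
              _ ≤ (m : ℝ) ^ k := pow_le_pow_right₀ (by exact_mod_cast hm1) hk1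
          have h3 : Tn t m ≤ HH M ^ t.length :=
            le_trans (Tn_mono t hmM) (ih (fun x hx => h1 x (List.mem_cons_of_mem _ hx)) M)
          exact mul_le_mul h2 h3 (Tn_nonneg t m) (by positivity)
      _ = (∑ m ∈ Finset.Icc 1 M, (m : ℝ)⁻¹) * HH M ^ t.length := by
          rw [← Finset.sum_mul]
      _ ≤ HH M * HH M ^ t.length := by
          refine mul_le_mul_of_nonneg_right ?_ h0
          simp only [HH]
          linarith
      _ = HH M ^ (k :: t).length := by rw [List.length_cons, pow_succ']

lemma HH_le_log (M : ℕ) (hM : 1 ≤ M) : HH M ≤ 2 + Real.log M := by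
  have h : (harmonic M : ℝ) ≤ 1 + Real.log M := harmonic_le_one_add_log M
  have he : ∑ m ∈ Finset.Icc 1 M, (m : ℝ)⁻¹ = (harmonic M : ℝ) := by
    rw [harmonic_eq_sum_Icc]
    push_cast
    rfl
  simp only [HH, he]
  linarith

lemma log_bound (N : ℕ) (hN : 1 ≤ N) (m : ℕ) (hm : 1 ≤ m) :
    2 + Real.log m ≤ (2 + 2 * N) * (m : ℝ) ^ ((1 : ℝ) / (2 * N)) := by
  set δ : ℝ := (1 : ℝ) / (2 * N) with hδ
  have hm0 : (0 : ℝ) < m := by exact_mod_cast hm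
  have hδ0 : 0 < δ := by
    apply div_pos one_pos
    positivity
  have h1 : (1 : ℝ) ≤ (m : ℝ) ^ δ :=
    Real.one_le_rpow (by exact_mod_cast hm) (le_of_lt hδ0)
  have hN0 : (0 : ℝ) < 2 * N := by positivity
  have hlog : Real.log m = (2 * N) * Real.log ((m : ℝ) ^ δ) := by
    rw [Real.log_rpow hm0, hδ]
    field_simp
  have h2 : Real.log ((m : ℝ) ^ δ) ≤ (m : ℝ) ^ δ := by
    have := Real.log_le_sub_one_of_pos (Real.rpow_pos_of_pos hm0 δ)
    linarith
  have h3 : Real.log m ≤ 2 * N * (m : ℝ) ^ δ := by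
    rw [hlog]
    exact mul_le_mul_of_nonneg_left h2 (le_of_lt hN0)
  nlinarith [Real.rpow_nonneg (le_of_lt hm0) δ]

lemma fiber_bound (k : ℕ) (hk : 2 ≤ k) (t : List ℕ) (ht : ∀ x ∈ t, 1 ≤ x) (m : ℕ) :
    (1 / (m : ℝ) ^ k) * Tn t m ≤
      ((2 + 2 * (t.length + 1 : ℕ)) ^ (t.length + 1)) * (1 / (m : ℝ) ^ ((3 : ℝ) / 2)) := by
  set N : ℕ := t.length + 1 with hNdef
  have hN : 1 ≤ N := Nat.le_add_left 1 _
  have hC0 : (0 : ℝ) ≤ (2 + 2 * (N : ℝ)) ^ N := by positivity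
  rcases Nat.eq_zero_or_pos m with rfl | hm
  · simp [zero_pow (by omega : k ≠ 0), Real.zero_rpow (by norm_num : (3 : ℝ) / 2 ≠ 0)]
  have hm0 : (0 : ℝ) < m := by exact_mod_cast hm
  have hm1 : (1 : ℝ) ≤ m := by exact_mod_cast hm
  -- Tn t m ≤ (2 + 2N)^N * m^(1/2)
  have hT1 : Tn t m ≤ HH m ^ N := by
    calc Tn t m ≤ HH m ^ t.length := Tn_le_HH_pow t ht m
      _ ≤ HH m ^ N := pow_le_pow_right₀ (one_le_HH m) (Nat.le_succ _)
  have hT2 : HH m ^ N ≤ (2 + Real.log m) ^ N := by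
    apply pow_le_pow_left₀ (le_trans zero_le_one (one_le_HH m)) (HH_le_log m hm)
  have hT3 : (2 + Real.log m) ^ N ≤ ((2 + 2 * N) * (m : ℝ) ^ ((1 : ℝ) / (2 * N))) ^ N := by
    apply pow_le_pow_left₀ _ (log_bound N hN m hm)
    have := Real.log_nonneg hm1
    linarith
  have hT4 : ((2 + 2 * N) * (m : ℝ) ^ ((1 : ℝ) / (2 * N))) ^ N
      = (2 + 2 * (N : ℝ)) ^ N * (m : ℝ) ^ ((1 : ℝ) / 2) := by
    rw [mul_pow, ← Real.rpow_natCast ((m : ℝ) ^ ((1 : ℝ) / (2 * N))) N,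
      ← Real.rpow_mul (le_of_lt hm0)]
    congr 2
    have : (N : ℝ) ≠ 0 := by positivity
    field_simp
  have hTn : Tn t m ≤ (2 + 2 * (N : ℝ)) ^ N * (m : ℝ) ^ ((1 : ℝ) / 2) := by
    calc Tn t m ≤ HH m ^ N := hT1
      _ ≤ _ := hT2
      _ ≤ _ := hT3
      _ = _ := hT4
  have hk2 : (1 : ℝ) / (m : ℝ) ^ k ≤ 1 / (m : ℝ) ^ 2 := by
    apply one_div_le_one_div_of_le (by positivity)
    exact pow_le_pow_right₀ hm1 hk
  have hmain : (1 / (m : ℝ) ^ k) * Tn t m ≤ (1 / (m : ℝ) ^ 2) * ((2 + 2 * (N : ℝ)) ^ N * (m : ℝ) ^ ((1 : ℝ) / 2)) :=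
    mul_le_mul hk2 hTn (Tn_nonneg t m) (by positivity)
  refine le_trans hmain (le_of_eq ?_)
  have hdiv : (m : ℝ) ^ ((1 : ℝ) / 2) / (m : ℝ) ^ (2 : ℕ) = 1 / (m : ℝ) ^ ((3 : ℝ) / 2) := by
    rw [← Real.rpow_natCast (m : ℝ) 2, ← Real.rpow_sub hm0,
      show (1 : ℝ) / 2 - ((2 : ℕ) : ℝ) = -(3 / 2) by norm_num,
      Real.rpow_neg (le_of_lt hm0), one_div]
  show (1 : ℝ) / (m : ℝ) ^ 2 * ((2 + 2 * (N : ℝ)) ^ N * (m : ℝ) ^ ((1 : ℝ) / 2))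
      = (2 + 2 * (N : ℝ)) ^ N * (1 / (m : ℝ) ^ ((3 : ℝ) / 2))
  rw [← hdiv]
  ring

lemma summable_G (k : ℕ) (hk : 2 ≤ k) (t : List ℕ) (ht : ∀ x ∈ t, 1 ≤ x) :
    Summable (fun m : ℕ => (1 / (m : ℝ) ^ k) * Tn t m) := by
  have hs : Summable (fun m : ℕ =>
      ((2 + 2 * (t.length + 1 : ℕ)) ^ (t.length + 1) : ℝ) * (1 / (m : ℝ) ^ ((3 : ℝ) / 2))) :=
    (Real.summable_one_div_nat_rpow.mpr (by norm_num)).mul_left _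
  refine Summable.of_nonneg_of_le (fun m => ?_) (fun m => fiber_bound k hk t ht m) hs
  exact mul_nonneg (by positivity) (Tn_nonneg t m)

noncomputable def DD (n M : ℕ) : Finset (Fin n → ℕ) :=
  (Fintype.piFinset fun _ => Finset.Icc 1 M).filter fun f => ∀ i j : Fin n, i < j → f j ≤ f i

lemma mem_DD {n M : ℕ} {f : Fin n → ℕ} :
    f ∈ DD n M ↔ (∀ i, 1 ≤ f i ∧ f i ≤ M) ∧ ∀ i j : Fin n, i < j → f j ≤ f i := by
  simp [DD, Fintype.mem_piFinset, Finset.mem_Icc]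

lemma DD_mono {n : ℕ} : Monotone (DD n) := by
  intro M M' h f hf
  rw [mem_DD] at hf ⊢
  exact ⟨fun i => ⟨(hf.1 i).1, le_trans (hf.1 i).2 h⟩, hf.2⟩

lemma sum_DD_succ (n M : ℕ) (e : Fin (n + 1) → ℕ) :
    ∑ F ∈ DD (n + 1) M, ∏ i, (1 : ℝ) / (F i : ℝ) ^ e i
      = ∑ m ∈ Finset.Icc 1 M, (1 / (m : ℝ) ^ e 0) *
          ∑ f ∈ DD n m, ∏ i, (1 : ℝ) / (f i : ℝ) ^ e i.succ := by
  have hc : ∀ m ∈ Finset.Icc 1 M, (1 / (m : ℝ) ^ e 0) *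
        (∑ f ∈ DD n m, ∏ i, (1 : ℝ) / (f i : ℝ) ^ e i.succ)
      = ∑ f ∈ DD n m, (1 / (m : ℝ) ^ e 0) * ∏ i, (1 : ℝ) / (f i : ℝ) ^ e i.succ :=
    fun m _ => Finset.mul_sum _ _ _
  rw [Finset.sum_congr rfl hc, Finset.sum_sigma']
  refine Finset.sum_nbij' (fun F => ⟨F 0, Fin.tail F⟩) (fun p => Fin.cons p.1 p.2)
    ?_ ?_ ?_ ?_ ?_
  · intro F hF
    rw [mem_DD] at hF
    obtain ⟨h1, h2⟩ := hF
    simp only [Finset.mem_sigma, Finset.mem_Icc]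
    refine ⟨⟨(h1 0).1, (h1 0).2⟩, ?_⟩
    rw [mem_DD]
    refine ⟨fun i => ⟨(h1 i.succ).1, h2 0 i.succ i.succ_pos⟩, ?_⟩
    intro i j hij
    exact h2 i.succ j.succ (by simpa [Fin.succ_lt_succ_iff] using hij)
  · rintro ⟨m, f⟩ hp
    simp only [Finset.mem_sigma, Finset.mem_Icc, mem_DD] at hp
    obtain ⟨⟨hm1, hmM⟩, ⟨hf1, hf2⟩⟩ := hp
    rw [mem_DD]
    constructor
    · intro i
      rcases Fin.eq_zero_or_eq_succ i with rfl | ⟨i', rfl⟩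
      · simpa using ⟨hm1, hmM⟩
      · simp only [Fin.cons_succ]
        exact ⟨(hf1 i').1, le_trans (hf1 i').2 hmM⟩
    · intro i j hij
      rcases Fin.eq_zero_or_eq_succ j with rfl | ⟨j', rfl⟩
      · exact absurd hij (by simp [Fin.le_zero_iff.mp (Fin.le_of_lt hij)])
      · rcases Fin.eq_zero_or_eq_succ i with rfl | ⟨i', rfl⟩
        · simp only [Fin.cons_succ, Fin.cons_zero]
          exact (hf1 j').2
        · simp only [Fin.cons_succ]
          exact hf2 i' j' (by simpa [Fin.succ_lt_succ_iff] using hij)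
  · intro F _
    exact Fin.cons_self_tail F
  · rintro ⟨m, f⟩ _
    simp [Fin.tail_cons]
  · intro F _
    rw [Fin.prod_univ_succ]
    rfl

lemma Tn_eq_sum (ks : List ℕ) (M : ℕ) :
    Tn ks M = ∑ f ∈ DD ks.length M, ∏ i, (1 : ℝ) / (f i : ℝ) ^ ks.get i := by
  induction ks generalizing M with
  | nil =>
    show (1 : ℝ) = ∑ f ∈ DD 0 M, ∏ i : Fin 0, (1 : ℝ) / (f i : ℝ) ^ ([] : List ℕ).get i
    have hsing : DD 0 M = {(default : Fin 0 → ℕ)} := by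
      apply Finset.eq_singleton_iff_unique_mem.mpr
      constructor
      · simp [DD, Fintype.mem_piFinset]
        funext i; exact i.elim0
      · intro f _; exact Subsingleton.elim _ _
    rw [hsing]
    simp
  | cons k t ih =>
    rw [Tn_cons]
    have hstep : ∀ m ∈ Finset.Icc 1 M, (1 / (m : ℝ) ^ k) * Tn t m
        = (1 / (m : ℝ) ^ k) * ∑ f ∈ DD t.length m, ∏ i, (1 : ℝ) / (f i : ℝ) ^ t.get i :=
      fun m _ => by rw [ih]
    rw [Finset.sum_congr rfl hstep]
    exact (sum_DD_succ t.length M fun i => (k :: t).get i).symm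

lemma summable_F (ks : List ℕ) (h1 : ∀ x ∈ ks, 1 ≤ x)
    (h2 : ∀ k t, ks = k :: t → 2 ≤ k) :
    Summable (fun f : {f : Fin ks.length → ℕ //
        (∀ i j : Fin ks.length, i < j → f j ≤ f i) ∧ ∀ i, 1 ≤ f i} =>
      ∏ i, (1 : ℝ) / (f.1 i : ℝ) ^ ks.get i) := by
  classical
  cases ks with
  | nil =>
    haveI : IsEmpty (Fin ([] : List ℕ).length) := ⟨fun i => i.elim0⟩
    exact Summable.of_finite
  | cons k t =>
    have hk : 2 ≤ k := h2 k t rfl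
    have ht : ∀ x ∈ t, 1 ≤ x := fun x hx => h1 x (List.mem_cons_of_mem _ hx)
    have hG : Summable (fun m : ℕ => (1 / (m : ℝ) ^ k) * Tn t m) := summable_G k hk t ht
    have hFnn : ∀ f : {f : Fin (k :: t).length → ℕ //
        (∀ i j : Fin (k :: t).length, i < j → f j ≤ f i) ∧ ∀ i, 1 ≤ f i},
        0 ≤ ∏ i, (1 : ℝ) / (f.1 i : ℝ) ^ (k :: t).get i :=
      fun f => Finset.prod_nonneg fun i _ => by positivity
    refine summable_of_sum_le (c := ∑' m : ℕ, (1 / (m : ℝ) ^ k) * Tn t m) hFnn ?_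
    intro u
    set M : ℕ := u.sup fun x => Finset.univ.sup x.1 with hM
    have himg : u.image Subtype.val ⊆ DD (k :: t).length M := by
      intro f hf
      rcases Finset.mem_image.mp hf with ⟨x, hx, rfl⟩
      rw [mem_DD]
      refine ⟨fun i => ⟨x.2.2 i, ?_⟩, x.2.1⟩
      calc x.1 i ≤ Finset.univ.sup x.1 := Finset.le_sup (Finset.mem_univ i)
        _ ≤ M := Finset.le_sup (f := fun x => Finset.univ.sup x.1) hx
    calc ∑ x ∈ u, ∏ i, (1 : ℝ) / (x.1 i : ℝ) ^ (k :: t).get i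
        = ∑ f ∈ u.image Subtype.val, ∏ i, (1 : ℝ) / (f i : ℝ) ^ (k :: t).get i := by
          rw [Finset.sum_image]
          intro a _ b _ hab
          exact Subtype.ext hab
      _ ≤ ∑ f ∈ DD (k :: t).length M, ∏ i, (1 : ℝ) / (f i : ℝ) ^ (k :: t).get i := by
          refine Finset.sum_le_sum_of_subset_of_nonneg himg ?_
          exact fun f _ _ => Finset.prod_nonneg fun i _ => by positivity
      _ = Tn (k :: t) M := (Tn_eq_sum _ M).symm
      _ = ∑ m ∈ Finset.Icc 1 M, (1 / (m : ℝ) ^ k) * Tn t m := Tn_cons k t M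
      _ ≤ ∑' m : ℕ, (1 / (m : ℝ) ^ k) * Tn t m := by
          refine Summable.sum_le_tsum _ (fun m _ => ?_) hG
          exact mul_nonneg (by positivity) (Tn_nonneg t m)

lemma tendsto_Tn (ks : List ℕ) (h1 : ∀ x ∈ ks, 1 ≤ x)
    (h2 : ∀ k t, ks = k :: t → 2 ≤ k) :
    Filter.Tendsto (fun M => Tn ks M) Filter.atTop (nhds (mzvStar ks)) := by
  classical
  have hsum := summable_F ks h1 h2
  have h3 : Filter.Tendsto
      (fun s : Finset {f : Fin ks.length → ℕ //
          (∀ i j : Fin ks.length, i < j → f j ≤ f i) ∧ ∀ i, 1 ≤ f i} =>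
        ∑ x ∈ s, ∏ i, (1 : ℝ) / (x.1 i : ℝ) ^ ks.get i)
      Filter.atTop (nhds (mzvStar ks)) := hsum.hasSum
  set s : ℕ → Finset {f : Fin ks.length → ℕ //
      (∀ i j : Fin ks.length, i < j → f j ≤ f i) ∧ ∀ i, 1 ≤ f i} :=
    fun M => (DD ks.length M).subtype _ with hs
  have hmono : Monotone s := fun a b hab => Finset.subtype_mono (DD_mono hab)
  have hexh : ∀ x, ∃ M, x ∈ s M := by
    intro x
    refine ⟨Finset.univ.sup x.1, ?_⟩
    rw [hs]
    simp only [Finset.mem_subtype]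
    rw [mem_DD]
    exact ⟨fun i => ⟨x.2.2 i, Finset.le_sup (Finset.mem_univ i)⟩, x.2.1⟩
  have h4 := h3.comp (hmono.tendsto_atTop_finset hexh)
  refine h4.congr ?_
  intro M
  show ∑ x ∈ (DD ks.length M).subtype
      (fun f => (∀ i j : Fin ks.length, i < j → f j ≤ f i) ∧ ∀ i, 1 ≤ f i),
      ∏ i, (1 : ℝ) / (x.1 i : ℝ) ^ ks.get i = Tn ks M
  have h5 : (∑ x ∈ (DD ks.length M).subtype
      (fun f => (∀ i j : Fin ks.length, i < j → f j ≤ f i) ∧ ∀ i, 1 ≤ f i),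
      ∏ i, (1 : ℝ) / (x.1 i : ℝ) ^ ks.get i)
      = ∑ f ∈ (DD ks.length M).filter
          (fun f => (∀ i j : Fin ks.length, i < j → f j ≤ f i) ∧ ∀ i, 1 ≤ f i),
        ∏ i, (1 : ℝ) / (f i : ℝ) ^ ks.get i :=
    Finset.sum_subtype_eq_sum_filter
      (fun f : Fin ks.length → ℕ => ∏ i, (1 : ℝ) / (f i : ℝ) ^ ks.get i)
  rw [h5, Finset.filter_true_of_mem fun f hf => ?_, ← Tn_eq_sum]
  rw [mem_DD] at hf
  exact ⟨hf.2, fun i => (hf.1 i).1⟩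


/-! ### Algebra side -/

noncomputable def Tp (w : List ℕ+) (M : ℕ) : ℝ := Tn (w.map fun k : ℕ+ => (k : ℕ)) M

@[simp] lemma Tp_nil (M : ℕ) : Tp [] M = 1 := rfl

lemma Tp_cons (k : ℕ+) (w : List ℕ+) (M : ℕ) :
    Tp (k :: w) M = ∑ m ∈ Finset.Icc 1 M, (1 / (m : ℝ) ^ (k : ℕ)) * Tp w m := rfl

lemma Tp_nonneg (w : List ℕ+) (M : ℕ) : 0 ≤ Tp w M := Tn_nonneg _ _

noncomputable def TZh (M : ℕ) : H →+ ℝ :=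
  (Finsupp.liftAddHom fun w =>
    (AddMonoidHom.mulRight (Tp (FreeMonoid.toList w) M)).comp
      (Rat.castHom ℝ).toAddMonoidHom).comp MonoidAlgebra.coeffAddEquiv.toAddMonoidHom

lemma TZh_single (M : ℕ) (w : FreeMonoid ℕ+) (c : ℚ) :
    TZh M (MonoidAlgebra.single w c) = (c : ℝ) * Tp (FreeMonoid.toList w) M :=
  Finsupp.liftAddHom_apply_single _ _ _

lemma TZh_eq_sum (M : ℕ) (v : H) :
    TZh M v = ∑ w ∈ v.coeff.support, (v.coeff w : ℝ) * Tp (FreeMonoid.toList w) M := rfl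

lemma z_def (k : ℕ+) : z k = MonoidAlgebra.single (FreeMonoid.ofList [k]) (1 : ℚ) := rfl

lemma z_mul_single (k : ℕ+) (w : FreeMonoid ℕ+) (c : ℚ) :
    z k * MonoidAlgebra.single w c
      = MonoidAlgebra.single (FreeMonoid.ofList [k] * w) c := by
  rw [z_def, MonoidAlgebra.single_mul_single, one_mul]

lemma toList_of_mul (k : ℕ+) (w : FreeMonoid ℕ+) :
    FreeMonoid.toList (FreeMonoid.ofList [k] * w) = k :: FreeMonoid.toList w := rfl

lemma TZh_smul (M : ℕ) (q : ℚ) (v : H) : TZh M (q • v) = (q : ℝ) * TZh M v := by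
  induction v using MonoidAlgebra.induction with
  | zero => simp
  | single_add a b f haf hb ih =>
    rw [smul_add, map_add, map_add, ih, MonoidAlgebra.smul_single, TZh_single, TZh_single,
      smul_eq_mul]
    push_cast
    ring

lemma TZh_z_mul (k : ℕ+) (u : H) :
    ∀ M, TZh M (z k * u) = ∑ m ∈ Finset.Icc 1 M, (1 / (m : ℝ) ^ (k : ℕ)) * TZh m u := by
  induction u using MonoidAlgebra.induction with
  | zero => intro M; simp
  | single_add a b f haf hb ih =>
    intro M
    have hrhs : ∀ m ∈ Finset.Icc 1 M,
        (1 / (m : ℝ) ^ (k : ℕ)) * TZh m (MonoidAlgebra.single a b + f)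
          = (1 / (m : ℝ) ^ (k : ℕ)) * TZh m (MonoidAlgebra.single a b)
            + (1 / (m : ℝ) ^ (k : ℕ)) * TZh m f := by
      intro m _; rw [map_add]; ring
    rw [mul_add, map_add, ih, Finset.sum_congr rfl hrhs, Finset.sum_add_distrib]
    congr 1
    rw [z_mul_single, TZh_single, toList_of_mul, Tp_cons, Finset.mul_sum]
    refine Finset.sum_congr rfl fun m _ => ?_
    rw [TZh_single]
    ring

lemma sum_mul_sum_Icc (a b : ℕ → ℝ) (M : ℕ) :
    (∑ m ∈ Finset.Icc 1 M, a m) * (∑ n ∈ Finset.Icc 1 M, b n)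
      = (∑ m ∈ Finset.Icc 1 M, a m * ∑ n ∈ Finset.Icc 1 m, b n)
        + (∑ n ∈ Finset.Icc 1 M, (∑ m ∈ Finset.Icc 1 n, a m) * b n)
        - ∑ m ∈ Finset.Icc 1 M, a m * b m := by
  induction M with
  | zero => simp
  | succ M ih =>
    have h1 : (1 : ℕ) ≤ M + 1 := Nat.succ_le_succ (Nat.zero_le M)
    rw [Finset.sum_Icc_succ_top h1 a, Finset.sum_Icc_succ_top h1 b,
      Finset.sum_Icc_succ_top h1 (fun m => a m * ∑ n ∈ Finset.Icc 1 m, b n),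
      Finset.sum_Icc_succ_top h1 (fun n => (∑ m ∈ Finset.Icc 1 n, a m) * b n),
      Finset.sum_Icc_succ_top h1 (fun m => a m * b m),
      Finset.sum_Icc_succ_top h1 a, Finset.sum_Icc_succ_top h1 b]
    linear_combination ih

theorem TZ_stbar : ∀ (w1 w2 : List ℕ+) (M : ℕ),
    TZh M (stbar w1 w2) = Tp w1 M * Tp w2 M
  | [], w, M => by
    simp only [stbar]
    show TZh M (MonoidAlgebra.single (FreeMonoid.ofList w) 1) = Tp [] M * Tp w M
    rw [TZh_single, FreeMonoid.toList_ofList, Tp_nil]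
    push_cast
    ring
  | k :: w1, [], M => by
    simp only [stbar]
    show TZh M (MonoidAlgebra.single (FreeMonoid.ofList (k :: w1)) 1)
      = Tp (k :: w1) M * Tp [] M
    rw [TZh_single, FreeMonoid.toList_ofList, Tp_nil]
    push_cast
    ring
  | k :: w1, l :: w2, M => by
    have ih1 := TZ_stbar w1 (l :: w2)
    have ih2 := TZ_stbar (k :: w1) w2
    have ih3 := TZ_stbar w1 w2
    simp only [stbar]
    rw [map_sub, map_add, TZh_z_mul, TZh_z_mul, TZh_z_mul]
    have e1 : ∀ m ∈ Finset.Icc 1 M, (1 / (m : ℝ) ^ (k : ℕ)) * TZh m (stbar w1 (l :: w2))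
        = ((1 / (m : ℝ) ^ (k : ℕ)) * Tp w1 m)
            * ∑ n ∈ Finset.Icc 1 m, (1 / (n : ℝ) ^ (l : ℕ)) * Tp w2 n := by
      intro m _; rw [ih1, Tp_cons]; ring
    have e2 : ∀ n ∈ Finset.Icc 1 M, (1 / (n : ℝ) ^ (l : ℕ)) * TZh n (stbar (k :: w1) w2)
        = (∑ m ∈ Finset.Icc 1 n, (1 / (m : ℝ) ^ (k : ℕ)) * Tp w1 m)
            * ((1 / (n : ℝ) ^ (l : ℕ)) * Tp w2 n) := by
      intro n _; rw [ih2, Tp_cons]; ring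
    have e3 : ∀ m ∈ Finset.Icc 1 M, (1 / (m : ℝ) ^ ((k + l : ℕ+) : ℕ)) * TZh m (stbar w1 w2)
        = ((1 / (m : ℝ) ^ (k : ℕ)) * Tp w1 m) * ((1 / (m : ℝ) ^ (l : ℕ)) * Tp w2 m) := by
      intro m _
      rw [ih3, PNat.add_coe, pow_add]
      ring
    rw [Finset.sum_congr rfl e1, Finset.sum_congr rfl e2, Finset.sum_congr rfl e3,
      Tp_cons k w1 M, Tp_cons l w2 M]
    have key : (∑ m ∈ Finset.Icc 1 M, (1 / (m : ℝ) ^ (k : ℕ)) * Tp w1 m)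
          * (∑ n ∈ Finset.Icc 1 M, (1 / (n : ℝ) ^ (l : ℕ)) * Tp w2 n)
        = (∑ m ∈ Finset.Icc 1 M, ((1 / (m : ℝ) ^ (k : ℕ)) * Tp w1 m)
              * ∑ n ∈ Finset.Icc 1 m, (1 / (n : ℝ) ^ (l : ℕ)) * Tp w2 n)
          + (∑ n ∈ Finset.Icc 1 M, (∑ m ∈ Finset.Icc 1 n, (1 / (m : ℝ) ^ (k : ℕ)) * Tp w1 m)
              * ((1 / (n : ℝ) ^ (l : ℕ)) * Tp w2 n))
          - ∑ m ∈ Finset.Icc 1 M, ((1 / (m : ℝ) ^ (k : ℕ)) * Tp w1 m)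
              * ((1 / (m : ℝ) ^ (l : ℕ)) * Tp w2 m) :=
      sum_mul_sum_Icc (fun m => (1 / (m : ℝ) ^ (k : ℕ)) * Tp w1 m)
        (fun n => (1 / (n : ℝ) ^ (l : ℕ)) * Tp w2 n) M
    rw [key]
termination_by w1 w2 => w1.length + w2.length
decreasing_by all_goals (simp; try omega)

lemma TZ_stuffleBar (x y : H) (M : ℕ) :
    TZh M (stuffleBar x y) = TZh M x * TZh M y := by
  have expand : TZh M (stuffleBar x y)
      = ∑ w1 ∈ x.coeff.support, ∑ w2 ∈ y.coeff.support,
          (((x.coeff w1 : ℚ) : ℝ) * ((y.coeff w2 : ℚ) : ℝ)) *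
            (Tp (FreeMonoid.toList w1) M * Tp (FreeMonoid.toList w2) M) := by
    rw [stuffleBar, Finsupp.sum, map_sum]
    refine Finset.sum_congr rfl fun w1 _ => ?_
    rw [Finsupp.sum, map_sum]
    refine Finset.sum_congr rfl fun w2 _ => ?_
    rw [TZh_smul, TZ_stbar]
    push_cast
    ring
  rw [expand, TZh_eq_sum, TZh_eq_sum, Finset.sum_mul_sum]
  refine Finset.sum_congr rfl fun w1 _ => Finset.sum_congr rfl fun w2 _ => by ring

/-! ### memH0 closure properties -/

lemma memH0_single (w : FreeMonoid ℕ+) (c : ℚ)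
    (h : ∀ (k : ℕ+) (t : List ℕ+), FreeMonoid.toList w = k :: t → 2 ≤ (k : ℕ)) :
    memH0 (MonoidAlgebra.single w c) := by
  intro w' hw' k t hwl
  have := Finsupp.support_single_subset hw'
  rw [Finset.mem_singleton] at this
  subst this
  exact h k t hwl

lemma memH0_add {a b : H} (ha : memH0 a) (hb : memH0 b) : memH0 (a + b) := by
  classical
  intro w hw k t hwl
  rcases Finset.mem_union.mp (Finsupp.support_add hw) with h | h
  · exact ha w h k t hwl
  · exact hb w h k t hwl

lemma memH0_sub {a b : H} (ha : memH0 a) (hb : memH0 b) : memH0 (a - b) := by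
  classical
  intro w hw k t hwl
  rcases Finset.mem_union.mp (Finsupp.support_sub hw) with h | h
  · exact ha w h k t hwl
  · exact hb w h k t hwl

lemma memH0_z_mul (k : ℕ+) (hk : 2 ≤ (k : ℕ)) (u : H) : memH0 (z k * u) := by
  classical
  have aux : ∀ w ∈ (z k * u).coeff.support, ∃ t : List ℕ+, FreeMonoid.toList w = k :: t := by
    induction u using MonoidAlgebra.induction with
    | zero => simp
    | single_add a b f haf hb ih =>
      intro w hw
      rw [mul_add] at hw
      rcases Finset.mem_union.mp (Finsupp.support_add hw) with h | h
      · rw [z_mul_single] at h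
        have := Finsupp.support_single_subset h
        rw [Finset.mem_singleton] at this
        subst this
        exact ⟨FreeMonoid.toList a, toList_of_mul k a⟩
      · exact ih w h
  intro w hw k' t hwl
  obtain ⟨t', ht'⟩ := aux w hw
  rw [hwl] at ht'
  have : k' = k := by injection ht'
  rw [this]
  exact hk

lemma memH0_word (w : List ℕ+)
    (h : ∀ (k : ℕ+) (t : List ℕ+), w = k :: t → 2 ≤ (k : ℕ)) : memH0 (word w) :=
  memH0_single _ _ (by rw [FreeMonoid.toList_ofList]; exact h)

lemma memH0_stbar (w1 w2 : List ℕ+)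
    (h1 : ∀ (k : ℕ+) (t : List ℕ+), w1 = k :: t → 2 ≤ (k : ℕ))
    (h2 : ∀ (k : ℕ+) (t : List ℕ+), w2 = k :: t → 2 ≤ (k : ℕ)) :
    memH0 (stbar w1 w2) := by
  match w1, w2 with
  | [], w => simp only [stbar]; exact memH0_word w h2
  | k :: w1, [] => simp only [stbar]; exact memH0_word _ h1
  | k :: w1, l :: w2 =>
    have hk : 2 ≤ (k : ℕ) := h1 k w1 rfl
    have hl : 2 ≤ (l : ℕ) := h2 l w2 rfl
    simp only [stbar]
    refine memH0_sub (memH0_add ?_ ?_) ?_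
    · exact memH0_z_mul k hk _
    · exact memH0_z_mul l hl _
    · refine memH0_z_mul (k + l) ?_ _
      rw [PNat.add_coe]
      omega

lemma memH0_smul (q : ℚ) {u : H} (hu : memH0 u) : memH0 (q • u) := by
  intro w hw
  exact hu w (Finsupp.support_smul hw)

lemma memH0_stuffleBar {x y : H} (hx : memH0 x) (hy : memH0 y) :
    memH0 (stuffleBar x y) := by
  classical
  intro w hw k t hwl
  rw [stuffleBar, MonoidAlgebra.coeff_finsuppSum] at hw
  have h1 := Finsupp.support_sum hw
  rcases Finset.mem_biUnion.mp h1 with ⟨w1, hw1, hw2⟩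
  rw [MonoidAlgebra.coeff_finsuppSum] at hw2
  have h2 := Finsupp.support_sum hw2
  rcases Finset.mem_biUnion.mp h2 with ⟨w2, hw2', hw3⟩
  have h3 := Finsupp.support_smul hw3
  exact memH0_stbar (FreeMonoid.toList w1) (FreeMonoid.toList w2)
    (hx w1 hw1) (hy w2 hw2') w h3 k t hwl


lemma coeM_list (l : List ℕ+) :
    (List.map (fun k : ℕ => k) (do let a ← l; pure ((a : ℕ)))) = l.map fun p : ℕ+ => (p : ℕ) := by
  induction l with
  | nil => rfl
  | cons p t ih =>
    show (p : ℕ) :: (List.map (fun k : ℕ => k) (do let a ← t; pure ((a : ℕ)))) = _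
    rw [ih, List.map_cons]

lemma tendsto_TZh (v : H) (hv : memH0 v) :
    Filter.Tendsto (fun M => TZh M v) Filter.atTop (nhds (ZstarMap v)) := by
  have hz : ZstarMap v = ∑ w ∈ v.coeff.support,
      (v.coeff w : ℝ) * mzvStar ((FreeMonoid.toList w).map fun p : ℕ+ => (p : ℕ)) := by
    show (∑ w ∈ v.coeff.support,
        (v.coeff w : ℝ) * mzvStar ((FreeMonoid.toList w).map fun k => (k : ℕ))) = _
    exact Finset.sum_congr rfl fun w _ => by rw [coeM_list]
  have he : (fun M => TZh M v)
      = fun M => ∑ w ∈ v.coeff.support, (v.coeff w : ℝ) * Tp (FreeMonoid.toList w) M :=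
    funext fun M => TZh_eq_sum M v
  rw [hz, he]
  refine tendsto_finset_sum _ fun w hw => ?_
  refine Filter.Tendsto.const_mul _ ?_
  have harg1 : ∀ xk ∈ (FreeMonoid.toList w).map fun p : ℕ+ => (p : ℕ), 1 ≤ xk := by
    intro xk hxk
    rcases List.mem_map.mp hxk with ⟨p, _, rfl⟩
    exact p.2
  have harg2 : ∀ (kk : ℕ) (tt : List ℕ),
      ((FreeMonoid.toList w).map fun p : ℕ+ => (p : ℕ)) = kk :: tt → 2 ≤ kk := by
    intro kk tt h
    cases hl : FreeMonoid.toList w with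
    | nil => rw [hl] at h; simp at h
    | cons p t' =>
      rw [hl, List.map_cons] at h
      injection h with hh _
      rw [← hh]
      exact hv w hw p t' hl
  exact tendsto_Tn _ harg1 harg2

theorem ZstarMap_stuffleBar (x y : H) (hx : memH0 x) (hy : memH0 y) :
    ZstarMap (stuffleBar x y) = ZstarMap x * ZstarMap y := by
  have h1 := tendsto_TZh x hx
  have h2 := tendsto_TZh y hy
  have h3 := tendsto_TZh _ (memH0_stuffleBar hx hy)
  have h4 : Filter.Tendsto (fun M => TZh M (stuffleBar x y)) Filter.atTop
      (nhds (ZstarMap x * ZstarMap y)) :=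
    (h1.mul h2).congr fun M => (TZ_stuffleBar x y M).symm
  exact tendsto_nhds_unique h3 h4
end
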